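/- arXiv:math/0206001 — 5 statements merged into one kernel-verified Lean document; each statement's English description precedes it below -/
import Mathlib

section
/- Let k₀ be a commutative ring, let k be a k₀-algebra which is free as a k₀-module, let Γ be a group, and let M and N be modules over the group algebra k₀[Γ]. Then the canonical k-linear homomorphism k ⊗_{k₀} Hom_{k₀[Γ]}(M, N) → Hom_{k[Γ]}(k ⊗_{k₀} M, k ⊗_{k₀} N), sending α ⊗ φ to the map β ⊗ m ↦ αβ ⊗ φ(m), is injective. -/
open TensorProduct

/-- The module of `Γ`-equivariant linear maps, i.e. `Hom_{k₀[Γ]}(M, N)`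
(a `k₀[Γ]`-module homomorphism between representations is exactly an equivariant
`k₀`-linear map). -/
def equivariantHom {k : Type} [CommRing k] {Γ : Type} [Monoid Γ]
    {M N : Type} [AddCommGroup M] [Module k M] [AddCommGroup N] [Module k N]
    (ρ : Representation k Γ M) (ν : Representation k Γ N) :
    Submodule k (M →ₗ[k] N) where
  carrier := {f | ∀ (γ : Γ) (m : M), f (ρ γ m) = ν γ (f m)}
  add_mem' := by intro f g hf hg γ m; simp [hf γ m, hg γ m]
  zero_mem' := by intro γ m; simp
  smul_mem' := by intro c f hf γ m; simp [hf γ m]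

/-- Base change of a representation along a ring extension `k₀ → k`,
i.e. the representation of `Γ` on `k ⊗[k₀] V`, with `Γ` acting through the second factor. -/
noncomputable def Representation.tensorUp
    (k₀ k : Type) [CommRing k₀] [CommRing k] [Algebra k₀ k]
    {Γ : Type} [Monoid Γ] {V : Type} [AddCommGroup V] [Module k₀ V]
    (ρ : Representation k₀ Γ V) : Representation k Γ (k ⊗[k₀] V) :=
  (Module.End.baseChangeHom k₀ k V).toRingHom.toMonoidHom.comp ρ

lemma Representation.tensorUp_apply
    (k₀ k : Type) [CommRing k₀] [CommRing k] [Algebra k₀ k]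
    {Γ : Type} [Monoid Γ] {V : Type} [AddCommGroup V] [Module k₀ V]
    (ρ : Representation k₀ Γ V) (γ : Γ) :
    ρ.tensorUp k₀ k γ = (ρ γ).baseChange k := rfl

section canonical

variable (k₀ k : Type) [CommRing k₀] [CommRing k] [Algebra k₀ k]
variable {Γ : Type} [Monoid Γ]
variable {M N : Type} [AddCommGroup M] [Module k₀ M] [AddCommGroup N] [Module k₀ N]
variable (ρ : Representation k₀ Γ M) (ν : Representation k₀ Γ N)

/-- The canonical map `k ⊗[k₀] Hom_{k₀[Γ]}(M, N) →ₗ[k] Hom_k(k ⊗ M, k ⊗ N)`,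
sending `α ⊗ φ` to the map `β ⊗ m ↦ αβ ⊗ φ m`. -/
noncomputable def canonicalBaseChange :
    (k ⊗[k₀] ↥(equivariantHom ρ ν)) →ₗ[k] ((k ⊗[k₀] M) →ₗ[k] (k ⊗[k₀] N)) :=
  LinearMap.liftBaseChange k
    ((LinearMap.baseChangeHom k₀ k M N).comp (equivariantHom ρ ν).subtype)

lemma canonicalBaseChange_mem (x : k ⊗[k₀] ↥(equivariantHom ρ ν)) :
    canonicalBaseChange k₀ k ρ ν x ∈
      equivariantHom (ρ.tensorUp k₀ k) (ν.tensorUp k₀ k) := by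
  induction x using TensorProduct.induction_on with
  | zero => simpa using (equivariantHom (ρ.tensorUp k₀ k) (ν.tensorUp k₀ k)).zero_mem
  | add x y hx hy =>
      simpa using (equivariantHom (ρ.tensorUp k₀ k) (ν.tensorUp k₀ k)).add_mem hx hy
  | tmul a f =>
      intro γ m
      have hf : (f : M →ₗ[k₀] N) ∘ₗ (ρ γ) = (ν γ) ∘ₗ (f : M →ₗ[k₀] N) :=
        LinearMap.ext fun m => f.2 γ m
      have h2 : ((f : M →ₗ[k₀] N).baseChange k) ∘ₗ ((ρ γ).baseChange k)
          = ((ν γ).baseChange k) ∘ₗ ((f : M →ₗ[k₀] N).baseChange k) := by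
        rw [← LinearMap.baseChange_comp, ← LinearMap.baseChange_comp, hf]
      simp only [canonicalBaseChange, LinearMap.liftBaseChange_tmul, LinearMap.coe_comp,
        Function.comp_apply, Submodule.coe_subtype, LinearMap.baseChangeHom_apply,
        LinearMap.smul_apply, Representation.tensorUp_apply, map_smul]
      exact congrArg (a • ·) (LinearMap.congr_fun h2 m)

/-- The canonical map `k ⊗[k₀] Hom_{k₀[Γ]}(M, N) →ₗ[k] Hom_{k[Γ]}(k ⊗ M, k ⊗ N)`,
sending `α ⊗ φ` to the map `β ⊗ m ↦ αβ ⊗ φ m`. -/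
noncomputable def canonicalBaseChangeRes :
    (k ⊗[k₀] ↥(equivariantHom ρ ν)) →ₗ[k]
      ↥(equivariantHom (ρ.tensorUp k₀ k) (ν.tensorUp k₀ k)) :=
  LinearMap.codRestrict _ (canonicalBaseChange k₀ k ρ ν) (canonicalBaseChange_mem k₀ k ρ ν)

end canonical


section aux

variable {k₀ k : Type} [CommRing k₀] [CommRing k] [Algebra k₀ k]
variable {ι : Type} (b : Module.Basis ι k₀ k)
variable {P Q : Type} [AddCommGroup P] [Module k₀ P] [AddCommGroup Q] [Module k₀ Q]

/-- the `i`-th coordinate projection `k ⊗[k₀] P →ₗ[k₀] P` w.r.t. a basis `b` of `k`. -/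
noncomputable def basisProj (i : ι) : k ⊗[k₀] P →ₗ[k₀] P :=
  TensorProduct.lift ((LinearMap.lsmul k₀ P).comp
    ((Finsupp.lapply i).comp b.repr.toLinearMap))

@[simp] lemma basisProj_tmul (i : ι) (a : k) (p : P) :
    basisProj b i (a ⊗ₜ[k₀] p) = b.repr a i • p := rfl

lemma basisProj_naturality (g : P →ₗ[k₀] Q) (i : ι) (x : k ⊗[k₀] P) :
    basisProj b i (LinearMap.lTensor k g x) = g (basisProj b i x) := by
  induction x using TensorProduct.induction_on with
  | zero => simp
  | add x y hx hy => simp [hx, hy]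
  | tmul a p => simp

lemma basisProj_eq_zero (x : k ⊗[k₀] P) (h : ∀ i, basisProj b i x = 0) : x = 0 := by
  classical
  let e : (k ⊗[k₀] P) ≃ₗ[k₀] (ι →₀ P) :=
    (TensorProduct.congr b.repr (LinearEquiv.refl k₀ P)).trans
      (TensorProduct.finsuppScalarLeft k₀ P ι)
  have key : ∀ (y : k ⊗[k₀] P) (i : ι), e y i = basisProj b i y := by
    intro y i
    induction y using TensorProduct.induction_on with
    | zero => simp
    | add y z hy hz => simp [hy, hz]
    | tmul a p =>
        simp [e, TensorProduct.congr_tmul,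
          TensorProduct.finsuppScalarLeft_apply_tmul_apply]
  have : e x = 0 := by ext i; simpa [key] using h i
  simpa using congrArg e.symm this

end aux

lemma lTensor_eval_eq (k₀ k : Type) [CommRing k₀] [CommRing k] [Algebra k₀ k]
    {Γ : Type} [Monoid Γ]
    {M N : Type} [AddCommGroup M] [Module k₀ M] [AddCommGroup N] [Module k₀ N]
    (ρ : Representation k₀ Γ M) (ν : Representation k₀ Γ N)
    (m : M) (x : k ⊗[k₀] ↥(equivariantHom ρ ν)) :
    LinearMap.lTensor k ((LinearMap.applyₗ m).comp (equivariantHom ρ ν).subtype) x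
      = canonicalBaseChange k₀ k ρ ν x ((1 : k) ⊗ₜ[k₀] m) := by
  induction x using TensorProduct.induction_on with
  | zero => simp
  | add y z hy hz => simp [hy, hz]
  | tmul a f =>
      simp only [LinearMap.lTensor_tmul, LinearMap.coe_comp, Function.comp_apply,
        Submodule.coe_subtype, LinearMap.applyₗ_apply_apply, canonicalBaseChange,
        LinearMap.liftBaseChange_tmul, LinearMap.baseChangeHom_apply,
        LinearMap.smul_apply, LinearMap.baseChange_tmul]
      rw [TensorProduct.smul_tmul', smul_eq_mul, mul_one]

/-- for `k` a `k₀`-algebra free as a `k₀`-module and representations `M`, `N`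
of a group `Γ` over `k₀`, the canonical map
`k ⊗[k₀] Hom_{k₀[Γ]}(M, N) → Hom_{k[Γ]}(k ⊗ M, k ⊗ N)` is injective. -/
theorem statement_2 (k₀ : Type) [CommRing k₀] (k : Type) [CommRing k] [Algebra k₀ k]
    [Module.Free k₀ k] (Γ : Type) [Group Γ]
    (M N : Type) [AddCommGroup M] [Module k₀ M] [AddCommGroup N] [Module k₀ N]
    (ρ : Representation k₀ Γ M) (ν : Representation k₀ Γ N) :
    Function.Injective (canonicalBaseChangeRes k₀ k ρ ν) := by
  have h0 : ∀ x, canonicalBaseChange k₀ k ρ ν x = 0 → x = 0 := by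
    intro x hx
    set b := Module.Free.chooseBasis k₀ k
    apply basisProj_eq_zero b
    intro i
    apply Subtype.ext
    apply LinearMap.ext
    intro m
    have := basisProj_naturality b
      ((LinearMap.applyₗ m).comp (equivariantHom ρ ν).subtype) i x
    rw [lTensor_eval_eq k₀ k ρ ν m x, hx] at this
    simpa using this.symm
  have hinj : Function.Injective (canonicalBaseChange k₀ k ρ ν) := fun x y hxy =>
    sub_eq_zero.mp (h0 _ (by rw [map_sub, hxy, sub_self]))
  intro x y h
  apply hinj
  have : ((canonicalBaseChangeRes k₀ k ρ ν x : (k ⊗[k₀] M) →ₗ[k] (k ⊗[k₀] N)))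
      = (canonicalBaseChangeRes k₀ k ρ ν y : (k ⊗[k₀] M) →ₗ[k] (k ⊗[k₀] N)) :=
    congrArg Subtype.val h
  exact this
end

section
/- Let k₀ be a commutative ring, let k be a k₀-algebra which is free as a k₀-module, let Γ be a group, and let M and N be modules over the group algebra k₀[Γ]. If M is finitely generated as a left k₀[Γ]-module, then the canonical k-linear homomorphism k ⊗_{k₀} Hom_{k₀[Γ]}(M, N) → Hom_{k[Γ]}(k ⊗_{k₀} M, k ⊗_{k₀} N), sending α ⊗ φ to the map β ⊗ m ↦ αβ ⊗ φ(m), is surjective (and hence bijective). -/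
open TensorProduct

section auxE

variable {k₀ k : Type} [CommRing k₀] [CommRing k] [Algebra k₀ k]
variable {N : Type} [AddCommGroup N] [Module k₀ N]
variable {ι : Type} [DecidableEq ι] (b : Module.Basis ι k₀ k)

/-- Identification of `k ⊗[k₀] N` with `ι →₀ N` coming from a basis of `k`. -/
noncomputable def tensorFinsupp : (k ⊗[k₀] N) ≃ₗ[k₀] (ι →₀ N) :=
  (TensorProduct.congr b.repr (LinearEquiv.refl k₀ N)).trans
    (TensorProduct.finsuppScalarLeft k₀ N ι)

lemma tensorFinsupp_tmul_apply (β : k) (n : N) (i : ι) :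
    tensorFinsupp b (β ⊗ₜ[k₀] n) i = b.repr β i • n := by
  simp [tensorFinsupp]

lemma tensorFinsupp_symm_single (i : ι) (n : N) :
    (tensorFinsupp b).symm (Finsupp.single i n) = b i ⊗ₜ[k₀] n := by
  simp [tensorFinsupp]

lemma tensorFinsupp_baseChange (g : N →ₗ[k₀] N) (x : k ⊗[k₀] N) (i : ι) :
    tensorFinsupp b (g.baseChange k x) i = g (tensorFinsupp b x i) := by
  induction x using TensorProduct.induction_on with
  | zero => simp
  | tmul β n => simp [tensorFinsupp_tmul_apply]
  | add x y hx hy => simp [hx, hy]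

lemma finsupp_eq_sum_of_support_subset (f : ι →₀ N) (T : Finset ι)
    (hT : f.support ⊆ T) : f = ∑ i ∈ T, Finsupp.single i (f i) := by
  ext j
  rw [Finsupp.finset_sum_apply T (fun i => Finsupp.single i (f i)) j,
    Finset.sum_congr rfl (fun i _ => Finsupp.single_apply),
    Finset.sum_ite_eq' T j (fun i => f i)]
  split_ifs with h
  · rfl
  · exact Finsupp.notMem_support_iff.mp (fun hs => h (hT hs))

end auxE

/-- for `k` a `k₀`-algebra free as a `k₀`-module and representations `M`, `N`
of a group `Γ` over `k₀`, with `M` finitely generated as a `k₀[Γ]`-module, the canonical map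
`k ⊗[k₀] Hom_{k₀[Γ]}(M, N) → Hom_{k[Γ]}(k ⊗ M, k ⊗ N)` is surjective. -/
theorem statement_3 (k₀ : Type) [CommRing k₀] (k : Type) [CommRing k] [Algebra k₀ k]
    [Module.Free k₀ k] (Γ : Type) [Group Γ]
    (M N : Type) [AddCommGroup M] [Module k₀ M] [AddCommGroup N] [Module k₀ N]
    (ρ : Representation k₀ Γ M) (ν : Representation k₀ Γ N)
    (hM : Module.Finite (MonoidAlgebra k₀ Γ) ρ.asModule) :
    Function.Surjective (canonicalBaseChangeRes k₀ k ρ ν) := by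
  classical
  rintro ⟨F, hF⟩
  set ι := Module.Free.ChooseBasisIndex k₀ k with hι
  letI : DecidableEq ι := Classical.decEq ι
  set b : Module.Basis ι k₀ k := Module.Free.chooseBasis k₀ k with hb
  -- the map `m ↦ coordinates of F (1 ⊗ m)`
  set ψ : M →ₗ[k₀] (ι →₀ N) :=
    (tensorFinsupp b).toLinearMap ∘ₗ (F.restrictScalars k₀) ∘ₗ
      (TensorProduct.mk k₀ k M 1) with hψ
  have hψ_apply : ∀ m : M, ψ m = tensorFinsupp b (F (1 ⊗ₜ[k₀] m)) := fun m => rfl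
  -- equivariance of the coordinates
  have hψ_equiv : ∀ (γ : Γ) (m : M) (i : ι), ψ (ρ γ m) i = ν γ (ψ m i) := by
    intro γ m i
    have h1 : (1 : k) ⊗ₜ[k₀] (ρ γ m) = (ρ.tensorUp k₀ k γ) (1 ⊗ₜ[k₀] m) := rfl
    have h2 : (ν.tensorUp k₀ k γ) (F (1 ⊗ₜ[k₀] m)) = (ν γ).baseChange k (F (1 ⊗ₜ[k₀] m)) := rfl
    rw [hψ_apply, hψ_apply, h1, hF γ (1 ⊗ₜ[k₀] m), h2, tensorFinsupp_baseChange]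
  -- finite generating set over the monoid algebra
  obtain ⟨S, hS⟩ := hM.fg_top
  set T : Finset ι := S.sup (fun s => (ψ (ρ.asModuleEquiv s)).support) with hT
  -- all coordinates outside T vanish
  have hvanish : ∀ (m : M) (i : ι), i ∉ T → ψ m i = 0 := by
    intro m i hi
    have hm : (ρ.asModuleEquiv.symm m) ∈
        Submodule.span (MonoidAlgebra k₀ Γ) (S : Set ρ.asModule) := by
      rw [hS]; trivial
    have key : ∀ (x : ρ.asModule), x ∈ Submodule.span (MonoidAlgebra k₀ Γ) (S : Set ρ.asModule) →
        ∀ j ∉ T, ψ (ρ.asModuleEquiv x) j = 0 := by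
      intro x hx
      induction hx using Submodule.span_induction with
      | mem s hs =>
          intro j hj
          apply Finsupp.notMem_support_iff.mp
          intro hsup
          exact hj (Finset.le_sup (f := fun s => (ψ (ρ.asModuleEquiv s)).support) hs hsup)
      | zero => intro j hj; simp
      | add x y hx hy ihx ihy =>
          intro j hj
          have : ρ.asModuleEquiv (x + y) = ρ.asModuleEquiv x + ρ.asModuleEquiv y := rfl
          rw [this, map_add, Finsupp.add_apply, ihx j hj, ihy j hj, add_zero]
      | smul a x hx ihx =>
          intro j hj
          show ψ (ρ.asAlgebraHom a (ρ.asModuleEquiv x)) j = 0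
          -- reduce to singles by induction on `a`
          induction a using MonoidAlgebra.induction with
          | zero => simp
          | single_add g c f hg hc ih =>
              rw [map_add, LinearMap.add_apply, map_add, Finsupp.add_apply, ih,
                Representation.asAlgebraHom_single, LinearMap.smul_apply, map_smul,
                Finsupp.smul_apply, hψ_equiv g _ j, ihx j hj, map_zero, smul_zero, add_zero]
    exact key _ hm i hi
  -- the equivariant coordinate maps
  have hφmem : ∀ i : ι, ((Finsupp.lapply i).comp ψ : M →ₗ[k₀] N) ∈ equivariantHom ρ ν := by
    intro i γ m
    exact hψ_equiv γ m i
  set φ : ι → ↥(equivariantHom ρ ν) := fun i => ⟨(Finsupp.lapply i).comp ψ, hφmem i⟩ with hφ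
  refine ⟨∑ i ∈ T, b i ⊗ₜ[k₀] φ i, ?_⟩
  apply Subtype.ext
  show canonicalBaseChange k₀ k ρ ν (∑ i ∈ T, b i ⊗ₜ[k₀] φ i) = F
  -- first compute F (1 ⊗ m)
  have hF1 : ∀ m : M, F (1 ⊗ₜ[k₀] m) = ∑ i ∈ T, b i ⊗ₜ[k₀] (ψ m i) := by
    intro m
    have hsupp : (ψ m).support ⊆ T := by
      intro j hj
      by_contra hjT
      exact (Finsupp.mem_support_iff.mp hj) (hvanish m j hjT)
    have := finsupp_eq_sum_of_support_subset (ψ m) T hsupp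
    calc F (1 ⊗ₜ[k₀] m) = (tensorFinsupp b).symm (ψ m) := by
            rw [hψ_apply]; exact ((tensorFinsupp b).symm_apply_apply _).symm
      _ = (tensorFinsupp b).symm (∑ i ∈ T, Finsupp.single i (ψ m i)) := by rw [← this]
      _ = ∑ i ∈ T, b i ⊗ₜ[k₀] (ψ m i) := by
            rw [map_sum]
            exact Finset.sum_congr rfl fun i _ => tensorFinsupp_symm_single b i (ψ m i)
  have hc : ∀ z : k ⊗[k₀] M, canonicalBaseChange k₀ k ρ ν (∑ i ∈ T, b i ⊗ₜ[k₀] φ i) z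
      = ∑ i ∈ T, b i • (((φ i : M →ₗ[k₀] N)).baseChange k z) := by
    intro z
    rw [map_sum, LinearMap.sum_apply]
    refine Finset.sum_congr rfl fun i _ => ?_
    rw [canonicalBaseChange, LinearMap.liftBaseChange_tmul, LinearMap.smul_apply]
    rfl
  apply LinearMap.ext
  intro z
  induction z using TensorProduct.induction_on with
  | zero => simp
  | add x y hx hy => rw [map_add, map_add, hx, hy]
  | tmul β m =>
      have hz : (β ⊗ₜ[k₀] m : k ⊗[k₀] M) = β • (1 ⊗ₜ[k₀] m) := by
        rw [TensorProduct.smul_tmul', smul_eq_mul, mul_one]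
      rw [hc]
      conv_rhs => rw [hz, map_smul, hF1, Finset.smul_sum]
      refine Finset.sum_congr rfl fun i _ => ?_
      rw [LinearMap.baseChange_tmul, TensorProduct.smul_tmul', TensorProduct.smul_tmul',
        smul_eq_mul, smul_eq_mul, mul_comm]
      rfl
end

section
/- Let k₀ be a field, let k be an extension field of k₀, and let Γ be a group. Let V be a representation of Γ on a finite-dimensional k₀-vector space. If the base change k ⊗_{k₀} V is semisimple as a k-representation of Γ (i.e., as a k[Γ]-module), then V is semisimple as a k₀-representation of Γ (i.e., as a k₀[Γ]-module). -/
open TensorProduct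

/-- `ρ.asModule` is an additive group (it is a type synonym for `V`). -/
noncomputable instance Representation.asModuleAddCommGroup
    {k G V : Type} [CommSemiring k] [Monoid G] [AddCommGroup V] [Module k V]
    {ρ : Representation k G V} : AddCommGroup ρ.asModule :=
  inferInstanceAs <| AddCommGroup V

/-- if the base change `k ⊗[k₀] V` of a finite-dimensional `k₀`-representation `V`
of `Γ` is semisimple as a `k[Γ]`-module, then `V` is semisimple as a `k₀[Γ]`-module. -/
theorem statement_9 (k₀ : Type) [Field k₀] (k : Type) [Field k] [Algebra k₀ k]
    (Γ : Type) [Group Γ]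
    (V : Type) [AddCommGroup V] [Module k₀ V] [FiniteDimensional k₀ V]
    (ρ : Representation k₀ Γ V)
    (h : IsSemisimpleModule (MonoidAlgebra k Γ) (ρ.tensorUp k₀ k).asModule) :
    IsSemisimpleModule (MonoidAlgebra k₀ Γ) ρ.asModule := by
  classical
  set σ := ρ.tensorUp k₀ k with hσ
  -- basic smul facts on `ρ.asModule`
  have smulA : ∀ (γ : Γ) (c : k₀) (x : V),
      (MonoidAlgebra.single γ c : MonoidAlgebra k₀ Γ) • (show ρ.asModule from x)
        = (show ρ.asModule from c • ρ γ x) := by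
    intro γ c x
    show ρ.asAlgebraHom _ x = _
    rw [Representation.asAlgebraHom_single]; rfl
  have smulAof : ∀ (γ : Γ) (x : V),
      (MonoidAlgebra.of k₀ Γ γ) • (show ρ.asModule from x) = (show ρ.asModule from ρ γ x) := by
    intro γ x
    show ρ.asAlgebraHom _ x = _
    rw [Representation.asAlgebraHom_of]
  have smulAc : ∀ (c : k₀) (x : V),
      (algebraMap k₀ (MonoidAlgebra k₀ Γ) c) • (show ρ.asModule from x)
        = (show ρ.asModule from c • x) := by
    intro c x
    have : algebraMap k₀ (MonoidAlgebra k₀ Γ) c = MonoidAlgebra.single 1 c := by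
      rw [MonoidAlgebra.coe_algebraMap]; simp
    rw [this, smulA]
    simp
    rfl
  -- smul facts on `σ.asModule`
  have smulBof : ∀ (γ : Γ) (x : k ⊗[k₀] V),
      (MonoidAlgebra.of k Γ γ) • (show σ.asModule from x)
        = (show σ.asModule from (ρ γ).baseChange k x) := by
    intro γ x
    show σ.asAlgebraHom _ x = _
    rw [Representation.asAlgebraHom_of]; rfl
  have smulBk : ∀ (c : k) (x : k ⊗[k₀] V),
      (MonoidAlgebra.single (1 : Γ) c : MonoidAlgebra k Γ) • (show σ.asModule from x)
        = (show σ.asModule from c • x) := by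
    intro c x
    show σ.asAlgebraHom _ x = _
    rw [Representation.asAlgebraHom_single]
    show c • σ 1 x = _
    rw [map_one]; rfl
  refine IsSemisimpleModule.mk (toComplementedLattice := ⟨?_⟩)
  intro W
  -- `W` as a `k₀`-submodule of `V`
  have hWk₀ : ∀ (c : k₀) (x : V), (show ρ.asModule from x) ∈ W →
      (show ρ.asModule from c • x) ∈ W := by
    intro c x hx
    rw [← smulAc]
    exact W.smul_mem _ hx
  have hWγ : ∀ (γ : Γ) (x : V), (show ρ.asModule from x) ∈ W →
      (show ρ.asModule from ρ γ x) ∈ W := by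
    intro γ x hx
    rw [← smulAof]
    exact W.smul_mem _ hx
  let W₀ : Submodule k₀ V :=
    { carrier := (W : Set ρ.asModule)
      add_mem' := W.add_mem
      zero_mem' := W.zero_mem
      smul_mem' := fun c x hx => hWk₀ c x hx }
  have memW₀ : ∀ x : V, x ∈ W₀ ↔ (show ρ.asModule from x) ∈ W := fun _ => Iff.rfl
  -- the base-changed submodule
  let WK : Submodule k (k ⊗[k₀] V) :=
    Submodule.span k ((fun w => (1 : k) ⊗ₜ[k₀] w) '' (W₀ : Set V))
  have hWKγ : ∀ (γ : Γ) (x : k ⊗[k₀] V), x ∈ WK → (ρ γ).baseChange k x ∈ WK := by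
    intro γ x hx
    have hmap : WK.map ((ρ γ).baseChange k) ≤ WK := by
      rw [Submodule.map_span, ← Set.image_comp]
      apply Submodule.span_le.2
      rintro _ ⟨w, hw, rfl⟩
      refine Submodule.subset_span ⟨ρ γ w, hWγ γ w hw, ?_⟩
      simp [LinearMap.baseChange_tmul]
    exact hmap ⟨x, hx, rfl⟩
  let WB : Submodule (MonoidAlgebra k Γ) σ.asModule :=
    { carrier := (WK : Set (k ⊗[k₀] V))
      add_mem' := WK.add_mem
      zero_mem' := WK.zero_mem
      smul_mem' := by
        intro b x hx
        induction b using MonoidAlgebra.induction_on with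
        | of γ => exact (congrArg (fun y : k ⊗[k₀] V => y ∈ WK) (smulBof γ x)).mpr (hWKγ γ x hx)
        | add f g hf hg => rw [add_smul]; exact WK.add_mem hf hg
        | smul r f hf =>
            have : (r • f) • (show σ.asModule from x) = r • (f • (show σ.asModule from x)) := by
              show σ.asAlgebraHom _ x = _
              rw [map_smul]; rfl
            rw [this]
            exact WK.smul_mem r hf }
  have memWB : ∀ x : k ⊗[k₀] V, (show σ.asModule from x) ∈ WB ↔ x ∈ WK := fun _ => Iff.rfl
  obtain ⟨C, hC⟩ := h.exists_isCompl WB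
  set π := @Submodule.projectionOnto _ _ _ Representation.asModuleAddCommGroup _ WB C hC with hπ
  set π' : k ⊗[k₀] V → k ⊗[k₀] V := fun x => ((π (show σ.asModule from x) : WB) : σ.asModule)
    with hπ'
  have ha : ∀ x : k ⊗[k₀] V, π' x ∈ WK := fun x => (π (show σ.asModule from x)).2
  have hb : ∀ x : k ⊗[k₀] V, x ∈ WK → π' x = x := by
    intro x hx
    have := Submodule.linearProjOfIsCompl_apply_left hC ⟨show σ.asModule from x, hx⟩
    rw [hπ']
    exact congrArg _ this
  have hadd : ∀ x y : k ⊗[k₀] V, π' (x + y) = π' x + π' y := by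
    intro x y
    simp only [hπ', map_add, Submodule.coe_add]
    exact congrArg Subtype.val (π.map_add x y)
  have hπk : ∀ (c : k) (x : k ⊗[k₀] V), π' (c • x) = c • π' x := by
    intro c x
    have e := π.map_smul (MonoidAlgebra.single (1 : Γ) c) (show σ.asModule from x)
    rw [hπ']
    simp only [← smulBk]
    rw [e]
    exact (Submodule.coe_smul _ _).trans (smulBk c _)
  have hπγ : ∀ (γ : Γ) (x : k ⊗[k₀] V),
      π' ((ρ γ).baseChange k x) = (ρ γ).baseChange k (π' x) := by
    intro γ x
    have e := π.map_smul (MonoidAlgebra.of k Γ γ) (show σ.asModule from x)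
    rw [hπ']
    simp only [← smulBof]
    rw [e]
    exact (Submodule.coe_smul _ _).trans (smulBof γ _)
  -- retraction φ : k → k₀
  have hker : LinearMap.ker (Algebra.linearMap k₀ k) = ⊥ := by
    rw [LinearMap.ker_eq_bot]
    intro a b hab
    exact (algebraMap k₀ k).injective hab
  obtain ⟨φ, hφ⟩ := (Algebra.linearMap k₀ k).exists_leftInverse_of_injective hker
  have hφ1 : φ 1 = 1 := by
    have := LinearMap.congr_fun hφ 1
    simpa using this
  let P : k ⊗[k₀] V →ₗ[k₀] V :=
    (TensorProduct.lid k₀ V).toLinearMap ∘ₗ TensorProduct.map φ LinearMap.id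
  have P_tmul : ∀ (c : k) (v : V), P (c ⊗ₜ[k₀] v) = φ c • v := by
    intro c v
    simp [P]
  -- P maps WK into W₀
  have hPW : ∀ x ∈ WK, P x ∈ W₀ := by
    set T : Set (k ⊗[k₀] V) := {x | ∃ c : k, ∃ w ∈ W₀, x = c ⊗ₜ[k₀] w} with hT
    have hWKT : ∀ x ∈ WK, x ∈ Submodule.span k₀ T := by
      intro x hx
      refine Submodule.span_induction ?_ ?_ ?_ ?_ hx
      · rintro _ ⟨w, hw, rfl⟩
        exact Submodule.subset_span ⟨1, w, hw, rfl⟩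
      · exact Submodule.zero_mem _
      · intro y z _ _ hy hz; exact Submodule.add_mem _ hy hz
      · intro c y _ hy
        let L : k ⊗[k₀] V →ₗ[k₀] k ⊗[k₀] V :=
          { toFun := fun z => c • z
            map_add' := fun a b => smul_add c a b
            map_smul' := fun a z => (smul_comm a c z).symm }
        have : (Submodule.span k₀ T).map L ≤ Submodule.span k₀ T := by
          rw [Submodule.map_span]
          apply Submodule.span_le.2
          rintro _ ⟨z, ⟨c', w, hw, rfl⟩, rfl⟩
          refine Submodule.subset_span ⟨c * c', w, hw, ?_⟩
          show c • (c' ⊗ₜ[k₀] w) = _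
          rw [smul_tmul']
          rfl
        exact this ⟨y, hy, rfl⟩
    intro x hx
    refine Submodule.span_induction ?_ ?_ ?_ ?_ (hWKT x hx)
    · rintro _ ⟨c, w, hw, rfl⟩
      rw [P_tmul]
      exact W₀.smul_mem _ hw
    · simp only [map_zero]; exact W₀.zero_mem
    · intro y z _ _ hy hz; rw [map_add]; exact W₀.add_mem hy hz
    · intro a y _ hy; rw [map_smul]; exact W₀.smul_mem a hy
  -- P intertwines the Γ-actions
  have hPγ : ∀ (γ : Γ) (x : k ⊗[k₀] V), P ((ρ γ).baseChange k x) = ρ γ (P x) := by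
    intro γ x
    induction x using TensorProduct.induction_on with
    | zero => simp
    | tmul c v => rw [LinearMap.baseChange_tmul, P_tmul, P_tmul, map_smul]
    | add y z hy hz => simp only [map_add, hy, hz]
  -- the projection on V
  set p : V → V := fun v => P (π' ((1 : k) ⊗ₜ[k₀] v)) with hp
  have h1 : ∀ v : V, p v ∈ W₀ := fun v => hPW _ (ha _)
  have h2 : ∀ w ∈ W₀, p w = w := by
    intro w hw
    rw [hp]
    simp only
    rw [hb _ (Submodule.subset_span ⟨w, hw, rfl⟩), P_tmul, hφ1, one_smul]
  have h3 : ∀ x y : V, p (x + y) = p x + p y := by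
    intro x y
    rw [hp]
    simp only [tmul_add, hadd, map_add]
  have h4c : ∀ (c : k₀) (v : V), p (c • v) = c • p v := by
    intro c v
    rw [hp]
    simp only
    rw [tmul_smul, ← algebraMap_smul k c ((1 : k) ⊗ₜ[k₀] v), hπk, algebraMap_smul, map_smul]
  have h4γ : ∀ (γ : Γ) (v : V), p (ρ γ v) = ρ γ (p v) := by
    intro γ v
    rw [hp]
    simp only
    have : (1 : k) ⊗ₜ[k₀] (ρ γ v) = (ρ γ).baseChange k ((1 : k) ⊗ₜ[k₀] v) := by
      rw [LinearMap.baseChange_tmul]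
    rw [this, hπγ, hPγ]
  -- p as an A-linear map
  let q : ρ.asModule →ₗ[MonoidAlgebra k₀ Γ] ρ.asModule :=
    { toFun := fun m => show ρ.asModule from p m
      map_add' := h3
      map_smul' := by
        intro a m
        simp only [RingHom.id_apply]
        induction a using MonoidAlgebra.induction_on with
        | of γ => exact (congrArg p (smulAof γ m)).trans ((h4γ γ m).trans (smulAof γ (p m)).symm)
        | add f g hf hg =>
            rw [add_smul]
            exact (h3 _ _).trans ((congrArg₂ (· + ·) hf hg).trans (add_smul f g (show ρ.asModule from p m)).symm)
        | smul r f hf =>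
            have e : ∀ x : V, (r • f) • (show ρ.asModule from x)
                = (show ρ.asModule from r • (f • (show ρ.asModule from x) : ρ.asModule)) := by
              intro x
              show ρ.asAlgebraHom _ x = _
              rw [map_smul]; rfl
            exact (congrArg p (e m)).trans ((h4c r _).trans ((congrArg (fun v : V => r • v) hf).trans (e (p m)).symm)) }
  refine ⟨LinearMap.ker q, ?_, ?_⟩
  · rw [Submodule.disjoint_def]
    intro x hxW hxK
    have : q x = x := h2 x hxW
    rw [LinearMap.mem_ker.1 hxK] at this
    exact this.symm
  · rw [codisjoint_iff, eq_top_iff]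
    intro m _
    refine Submodule.mem_sup.2 ⟨q m, h1 m, m - q m, ?_, by abel⟩
    rw [LinearMap.mem_ker, map_sub]
    have : q (q m) = q m := h2 (q m) (h1 m)
    rw [this, sub_self]
end

section
/- Let k be an algebraically closed field and let f ∈ k[T] be a monic polynomial of degree r ≥ 1. Then f has a root of multiplicity exactly one in k if and only if f does not divide (f′)² in k[T], where f′ denotes the derivative of f. -/
open Polynomial

/-- over an algebraically closed field, a monic polynomial `f` of degree `r ≥ 1`
has a root of multiplicity exactly one iff `f` does not divide the square of its derivative. -/
theorem statement_10 (k : Type) [Field k] [IsAlgClosed k] (r : ℕ) (hr : 1 ≤ r)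
    (f : Polynomial k) (hmonic : f.Monic) (hdeg : f.natDegree = r) :
    (∃ α : k, Polynomial.rootMultiplicity α f = 1) ↔
      ¬ f ∣ (Polynomial.derivative f) ^ 2 := by
  classical
  have hf0 : f ≠ 0 := hmonic.ne_zero
  constructor
  · rintro ⟨α, hα⟩ hdvd
    have h1 : (X - C α) ∣ f := by
      have := f.pow_rootMultiplicity_dvd α
      rwa [hα, pow_one] at this
    have h2 : (X - C α) ∣ (derivative f) ^ 2 := h1.trans hdvd
    have hprime : Prime (X - C α) := prime_X_sub_C α
    have h3 : (X - C α) ∣ derivative f := hprime.dvd_of_dvd_pow h2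
    have hroot : f.IsRoot α := by
      rw [← dvd_iff_isRoot]; exact h1
    have hroot' : (derivative f).IsRoot α := by
      rw [← dvd_iff_isRoot]; exact h3
    have : 1 < f.rootMultiplicity α :=
      (Polynomial.one_lt_rootMultiplicity_iff_isRoot hf0).2 ⟨hroot, hroot'⟩
    omega
  · intro hndvd
    by_contra hne
    push_neg at hne
    apply hndvd
    by_cases hd0 : derivative f = 0
    · rw [hd0]; simp
    have hfprod : f = f.roots.toFinset.prod fun a => (X - C a) ^ rootMultiplicity a f := by
      conv_lhs => rw [Polynomial.Splits.eq_prod_roots_of_monic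
        (IsAlgClosed.splits f) hmonic]
      exact Polynomial.prod_multiset_root_eq_finset_root
    conv_lhs => rw [hfprod]
    refine Finset.prod_dvd_of_coprime (fun a _ b _ hab => ?_) (fun a ha => ?_)
    · exact (Polynomial.pairwise_coprime_X_sub_C Function.injective_id hab).pow
    · have haroot : f.IsRoot a := isRoot_of_mem_roots (Multiset.mem_toFinset.mp ha)
      have hm1 : 1 ≤ rootMultiplicity a f := (rootMultiplicity_pos hf0).2 haroot
      have hm2 : 2 ≤ rootMultiplicity a f := by
        rcases Nat.lt_or_ge (rootMultiplicity a f) 2 with h | h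
        · exact absurd (by omega : rootMultiplicity a f = 1) (hne a)
        · exact h
      have hle : rootMultiplicity a f - 1 ≤ rootMultiplicity a (derivative f) :=
        rootMultiplicity_sub_one_le_derivative_rootMultiplicity_of_ne_zero f a hd0
      have h1 : (X - C a) ^ (rootMultiplicity a f - 1) ∣ derivative f :=
        (pow_dvd_pow _ hle).trans ((derivative f).pow_rootMultiplicity_dvd a)
      calc (X - C a) ^ rootMultiplicity a f
          ∣ (X - C a) ^ (2 * (rootMultiplicity a f - 1)) := pow_dvd_pow _ (by omega)
        _ = ((X - C a) ^ (rootMultiplicity a f - 1)) ^ 2 := by rw [← pow_mul, mul_comm]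
        _ ∣ (derivative f) ^ 2 := pow_dvd_pow_of_dvd h1 2
end

section
/- Let k be an algebraically closed field and let r ≥ 1 be an integer. Then there exists a finite family Q₁, …, Q_m of polynomials over k in r² variables (indexed by the entries of an r × r matrix) such that for every matrix g ∈ Matrix(r, r, k): the characteristic polynomial of g has a root of multiplicity exactly one in k if and only if Q_j evaluated at the entries of g is nonzero for some j. In other words, the set of r × r matrices over k having an eigenvalue of multiplicity one is the complement of the common zero locus of finitely many polynomial functions of the matrix entries (a Zariski-open condition). -/
open Polynomial

theorem simple_root_iff (k : Type) [Field k] [IsAlgClosed k] {r : ℕ} (hr : 1 ≤ r)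
    {p : k[X]} (hm : p.Monic) (hdeg : p.natDegree = r) :
    (∃ α : k, rootMultiplicity α p = 1) ↔ ¬ p ∣ (derivative p) ^ r := by
  classical
  have hp0 : p ≠ 0 := hm.ne_zero
  constructor
  · rintro ⟨α, hα⟩ hdvd
    have hroot : p.IsRoot α := (rootMultiplicity_pos hp0).mp (by omega)
    have hd : ¬ (derivative p).IsRoot α := by
      intro h0
      have := (one_lt_rootMultiplicity_iff_isRoot hp0).mpr ⟨hroot, h0⟩
      omega
    have : ((derivative p) ^ r).eval α = 0 :=
      eval_eq_zero_of_dvd_of_eval_eq_zero hdvd hroot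
    rw [eval_pow] at this
    exact hd (pow_eq_zero_iff (by omega) |>.mp this)
  · intro hnd
    by_contra hno
    push_neg at hno
    apply hnd
    by_cases hd0 : derivative p = 0
    · rw [hd0, zero_pow (by omega)]; exact dvd_zero p
    have hface : p.roots ≤ ((derivative p) ^ r).roots := by
      rw [Multiset.le_iff_count]
      intro α
      rw [roots_pow, Multiset.count_nsmul, count_roots, count_roots]
      by_cases hroot : rootMultiplicity α p = 0
      · simp [hroot]
      have h2 : 2 ≤ rootMultiplicity α p := by have := hno α; omega
      have hαd : (derivative p).IsRoot α :=
        ((one_lt_rootMultiplicity_iff_isRoot hp0).mp (by omega)).2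
      have hmult : 1 ≤ rootMultiplicity α (derivative p) :=
        (rootMultiplicity_pos hd0).mpr hαd
      have hle : rootMultiplicity α p ≤ r := by
        classical
        rw [← count_roots]
        calc p.roots.count α ≤ Multiset.card p.roots := Multiset.count_le_card _ _
          _ ≤ p.natDegree := p.card_roots'
          _ = r := hdeg
      calc rootMultiplicity α p ≤ r := hle
        _ ≤ r * rootMultiplicity α (derivative p) := Nat.le_mul_of_pos_right r hmult
    calc p = (p.roots.map fun a => X - C a).prod :=
          (IsAlgClosed.splits p).eq_prod_roots_of_monic hm
      _ ∣ (((derivative p) ^ r).roots.map fun a => X - C a).prod :=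
          Multiset.prod_dvd_prod_of_le (Multiset.map_le_map hface)
      _ ∣ (derivative p) ^ r := prod_multiset_X_sub_C_dvd _

/-- over an algebraically closed field, having an eigenvalue of multiplicity one
(i.e. the characteristic polynomial has a root of multiplicity exactly one) is a Zariski-open
condition on `r × r` matrices: it is the nonvanishing locus of finitely many polynomials in the
matrix entries. -/
theorem statement_12 (k : Type) [Field k] [IsAlgClosed k] (r : ℕ) (hr : 1 ≤ r) :
    ∃ (m : ℕ) (Q : Fin m → MvPolynomial (Fin r × Fin r) k),
      ∀ g : Matrix (Fin r) (Fin r) k,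
        (∃ α : k, Polynomial.rootMultiplicity α (Matrix.charpoly g) = 1) ↔
          ∃ j : Fin m, MvPolynomial.eval (fun p => g p.1 p.2) (Q j) ≠ 0 := by
  classical
  set M : Matrix (Fin r) (Fin r) (MvPolynomial (Fin r × Fin r) k) :=
    Matrix.mvPolynomialX (Fin r) (Fin r) k with hM
  set P : Polynomial (MvPolynomial (Fin r × Fin r) k) := M.charpoly with hP
  refine ⟨r, fun j => ((derivative P ^ r) %ₘ P).coeff j, fun g => ?_⟩
  set φ : MvPolynomial (Fin r × Fin r) k →+* k :=
    (MvPolynomial.eval (fun p : Fin r × Fin r => g p.1 p.2) : _ →+* k) with hφ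
  have hmap : M.map φ = g := by
    ext i j
    simp [hM, Matrix.mvPolynomialX_apply, hφ]
  have hcp : Matrix.charpoly g = P.map φ := by
    rw [hP, ← Matrix.charpoly_map, hmap]
  have hPm : P.Monic := Matrix.charpoly_monic M
  have hgm : (Matrix.charpoly g).Monic := Matrix.charpoly_monic g
  have hgd : (Matrix.charpoly g).natDegree = r := by
    rw [Matrix.charpoly_natDegree_eq_dim, Fintype.card_fin]
  -- evaluation of the Q's
  have hQ : ∀ j : Fin r, φ (((derivative P ^ r) %ₘ P).coeff j)
      = ((derivative (Matrix.charpoly g) ^ r) %ₘ (Matrix.charpoly g)).coeff j := by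
    intro j
    rw [hcp, ← coeff_map, map_modByMonic φ hPm, Polynomial.map_pow, derivative_map]
  rw [simple_root_iff k hr hgm hgd]
  set rem := (derivative (Matrix.charpoly g) ^ r) %ₘ (Matrix.charpoly g) with hrem
  have hdvd : Matrix.charpoly g ∣ derivative (Matrix.charpoly g) ^ r ↔ rem = 0 :=
    (modByMonic_eq_zero_iff_dvd hgm).symm
  constructor
  · intro hnd
    by_contra hall
    push_neg at hall
    apply hnd
    rw [hdvd]
    ext n
    by_cases hn : n < r
    · have := hall ⟨n, hn⟩
      rw [hQ] at this
      simpa using this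
    · simp only [coeff_zero]
      apply coeff_eq_zero_of_degree_lt
      calc rem.degree < (Matrix.charpoly g).degree :=
            degree_modByMonic_lt _ hgm
        _ = (r : ℕ) := by rw [degree_eq_natDegree hgm.ne_zero, hgd]
        _ ≤ (n : WithBot ℕ) := by exact_mod_cast Nat.le_of_not_lt hn
  · rintro ⟨j, hj⟩ hdvd'
    rw [hQ] at hj
    rw [hdvd] at hdvd'
    simp [hdvd'] at hj
end
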